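/- arXiv:2303.04733 — 2 statements merged into one kernel-verified Lean document; each statement's English description precedes it below -/
import Mathlib

section
/- Let D be an alternating dimap with clockwise face cycles C_1, ..., C_k, and for a root vertex r define M_{D,r}(x_1,...,x_k) = Σ_A ∏_{i=1}^k x_i^{a_i(A)}, where the sum runs over spanning arborescences A of D rooted at r and a_i(A) is the number of edges of A in C_i. Then the support of M_{D,r} is independent of the choice of r, and it equals the set of tuples (a_1(T),...,a_k(T)) as T ranges over all spanning trees of the underlying undirected graph of D. -/
/-- A finite directed multigraph given by source and target maps. -/
structure DigraphStr (V E : Type) where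
  src : E → V
  tgt : E → V

namespace DigraphStr

variable {V E : Type} (D : DigraphStr V E)

/-- Directed paths (lists of edges) inside an edge set `T`. -/
inductive DPath (T : Set E) : V → V → List E → Prop
  | nil (v : V) : DPath T v v []
  | cons {u w : V} {e : E} {p : List E} (he : e ∈ T) (hu : D.src e = u)
      (hp : DPath T (D.tgt e) w p) : DPath T u w (e :: p)

/-- Undirected walks (lists of edges, traversed forwards or backwards) inside `T`. -/
inductive UWalk (T : Set E) : V → V → List E → Prop
  | nil (v : V) : UWalk T v v []
  | consF {u w : V} {e : E} {p : List E} (he : e ∈ T) (hu : D.src e = u)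
      (hp : UWalk T (D.tgt e) w p) : UWalk T u w (e :: p)
  | consB {u w : V} {e : E} {p : List E} (he : e ∈ T) (hu : D.tgt e = u)
      (hp : UWalk T (D.src e) w p) : UWalk T u w (e :: p)

/-- `T` is a spanning arborescence rooted at `r`: there is a unique directed
path in `T` from `r` to every vertex. -/
def IsArborescence (T : Set E) (r : V) : Prop :=
  ∀ v : V, ∃! p : List E, D.DPath T r v p

/-- The edge set `T` connects all vertices (in the underlying undirected graph). -/
def Conn (T : Set E) : Prop := ∀ u v : V, ∃ p : List E, D.UWalk T u v p

/-- `T` is a spanning tree of the underlying undirected graph. -/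
def IsSpanningTree [Fintype V] (T : Finset E) : Prop :=
  D.Conn ↑T ∧ T.card + 1 = Fintype.card V

/-- A (nonempty, edge-distinct) directed cycle, given by its list of edges in order. -/
def IsDirCycle (c : List E) : Prop :=
  c ≠ [] ∧ c.Nodup ∧
    ∀ i : Fin c.length,
      D.tgt (c.get i) = D.src (c.get ⟨((i : ℕ) + 1) % c.length, Nat.mod_lt _ i.pos⟩)

variable {D}

namespace DPath

theorem eq_of_nil {T : Set E} {u v : V} (h : D.DPath T u v []) : u = v := by
  cases h; rfl

theorem append {T : Set E} {u v w : V} {p q : List E}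
    (h : D.DPath T u v p) (h' : D.DPath T v w q) : D.DPath T u w (p ++ q) := by
  induction h with
  | nil => exact h'
  | cons he hu _ ih => exact .cons he hu (ih h')

theorem concat {T : Set E} {u : V} {e : E} {p : List E}
    (h : D.DPath T u (D.src e) p) (he : e ∈ T) : D.DPath T u (D.tgt e) (p ++ [e]) :=
  h.append (.cons he rfl (.nil _))

theorem mem_sub {T : Set E} {u v : V} {p : List E}
    (h : D.DPath T u v p) {e : E} (he : e ∈ p) : e ∈ T := by
  induction h with
  | nil => simp at he
  | cons he' _ _ ih => rcases List.mem_cons.1 he with h | h; · exact h ▸ he'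
                       · exact ih h

theorem of_mem {T T' : Set E} {u v : V} {p : List E}
    (h : D.DPath T u v p) (hsub : ∀ e ∈ p, e ∈ T') : D.DPath T' u v p := by
  induction h with
  | nil => exact .nil _
  | cons he hu _ ih =>
      exact .cons (hsub _ List.mem_cons_self) hu
        (ih fun e he => hsub e (List.mem_cons_of_mem _ he))

/-- decomposition from the end -/
theorem eq_concat {T : Set E} {u v : V} {p : List E}
    (h : D.DPath T u v p) (hp : p ≠ []) :
    ∃ q e, p = q ++ [e] ∧ e ∈ T ∧ D.tgt e = v ∧ D.DPath T u (D.src e) q := by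
  induction h with
  | nil => exact absurd rfl hp
  | @cons a w e p' he hu hp' ih =>
      rcases eq_or_ne p' [] with rfl | hne
      · exact ⟨[], e, rfl, he, (eq_of_nil hp'), hu ▸ .nil _⟩
      · obtain ⟨q, f, rfl, hf, hft, hq⟩ := ih hne
        exact ⟨e :: q, f, rfl, hf, hft, .cons he hu hq⟩

/-- every edge on a directed path from `r` has its source reachable from `r` -/
theorem src_reach {T : Set E} {r v : V} {p : List E}
    (h : D.DPath T r v p) {e : E} (he : e ∈ p) :
    ∃ q, D.DPath T r (D.src e) q := by
  induction h with
  | nil => simp at he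
  | @cons a w f p' hf hu hp' ih =>
      rcases List.mem_cons.1 he with rfl | h
      · exact ⟨[], hu ▸ .nil _⟩
      · obtain ⟨q, hq⟩ := ih h
        exact ⟨f :: q, .cons hf hu hq⟩

end DPath

namespace UWalk

theorem eq_of_nil {T : Set E} {u v : V} (h : D.UWalk T u v []) : u = v := by
  cases h; rfl

theorem append {T : Set E} {u v w : V} {p q : List E}
    (h : D.UWalk T u v p) (h' : D.UWalk T v w q) : D.UWalk T u w (p ++ q) := by
  induction h with
  | nil => exact h'
  | consF he hu _ ih => exact .consF he hu (ih h')
  | consB he hu _ ih => exact .consB he hu (ih h')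

theorem reverse {T : Set E} {u v : V} {p : List E}
    (h : D.UWalk T u v p) : D.UWalk T v u p.reverse := by
  induction h with
  | nil => exact .nil _
  | consF he hu _ ih =>
      simpa using ih.append (.consB he rfl (hu ▸ .nil _))
  | consB he hu _ ih =>
      simpa using ih.append (.consF he rfl (hu ▸ .nil _))

theorem of_dpath {T : Set E} {u v : V} {p : List E}
    (h : D.DPath T u v p) : D.UWalk T u v p := by
  induction h with
  | nil => exact .nil _
  | cons he hu _ ih => exact .consF he hu ih

theorem mono {T T' : Set E} (hsub : T ⊆ T') {u v : V} {p : List E}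
    (h : D.UWalk T u v p) : D.UWalk T' u v p := by
  induction h with
  | nil => exact .nil _
  | consF he hu _ ih => exact .consF (hsub he) hu ih
  | consB he hu _ ih => exact .consB (hsub he) hu ih

theorem eq_concat {T : Set E} {u v : V} {p : List E}
    (h : D.UWalk T u v p) (hp : p ≠ []) :
    ∃ q e, p = q ++ [e] ∧ e ∈ T ∧
      ((D.tgt e = v ∧ D.UWalk T u (D.src e) q) ∨ (D.src e = v ∧ D.UWalk T u (D.tgt e) q)) := by
  induction h with
  | nil => exact absurd rfl hp
  | @consF a w e p' he hu hp' ih =>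
      rcases eq_or_ne p' [] with rfl | hne
      · exact ⟨[], e, rfl, he, .inl ⟨(eq_of_nil hp'), hu ▸ .nil _⟩⟩
      · obtain ⟨q, f, rfl, hf, hh⟩ := ih hne
        refine ⟨e :: q, f, rfl, hf, ?_⟩
        rcases hh with ⟨h1, h2⟩ | ⟨h1, h2⟩
        · exact .inl ⟨h1, .consF he hu h2⟩
        · exact .inr ⟨h1, .consF he hu h2⟩
  | @consB a w e p' he hu hp' ih =>
      rcases eq_or_ne p' [] with rfl | hne
      · exact ⟨[], e, rfl, he, .inr ⟨(eq_of_nil hp'), hu ▸ .nil _⟩⟩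
      · obtain ⟨q, f, rfl, hf, hh⟩ := ih hne
        refine ⟨e :: q, f, rfl, hf, ?_⟩
        rcases hh with ⟨h1, h2⟩ | ⟨h1, h2⟩
        · exact .inl ⟨h1, .consB he hu h2⟩
        · exact .inr ⟨h1, .consB he hu h2⟩

end UWalk

/-- reachability by undirected walks -/
def UReach (D : DigraphStr V E) (T : Set E) (u v : V) : Prop := ∃ p, D.UWalk T u v p

theorem UReach.refl (T : Set E) (v : V) : D.UReach T v v := ⟨[], .nil v⟩

theorem UReach.trans {T : Set E} {u v w : V} (h : D.UReach T u v) (h' : D.UReach T v w) :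
    D.UReach T u w := by
  obtain ⟨p, hp⟩ := h; obtain ⟨q, hq⟩ := h'; exact ⟨p ++ q, hp.append hq⟩

theorem UReach.symm {T : Set E} {u v : V} (h : D.UReach T u v) : D.UReach T v u := by
  obtain ⟨p, hp⟩ := h; exact ⟨p.reverse, hp.reverse⟩

theorem UReach.stepF {T : Set E} {u : V} {e : E} (he : e ∈ T) (h : D.UReach T u (D.src e)) :
    D.UReach T u (D.tgt e) := h.trans ⟨[e], .consF he rfl (.nil _)⟩

theorem UReach.stepB {T : Set E} {u : V} {e : E} (he : e ∈ T) (h : D.UReach T u (D.tgt e)) :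
    D.UReach T u (D.src e) := h.trans ⟨[e], .consB he rfl (.nil _)⟩

theorem UReach.mono {T T' : Set E} (hsub : T ⊆ T') {u v : V} (h : D.UReach T u v) :
    D.UReach T' u v := by obtain ⟨p, hp⟩ := h; exact ⟨p, hp.mono hsub⟩


end DigraphStr

namespace DigraphStr

open scoped Classical

variable {V E : Type} {D : DigraphStr V E}

theorem card_le_of_conn [Fintype V] (S : Finset E) (r : V)
    (hconn : ∀ v : V, D.UReach ↑S r v) : Fintype.card V ≤ S.card + 1 := by
  classical
  have exwalk : ∀ v : V, ∃ n, ∃ p, D.UWalk ↑S r v p ∧ p.length = n := by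
    intro v; obtain ⟨p, hp⟩ := hconn v; exact ⟨p.length, p, hp, rfl⟩
  set d : V → ℕ := fun v => Nat.find (exwalk v) with hd
  have dspec : ∀ v, ∃ p, D.UWalk ↑S r v p ∧ p.length = d v := fun v => Nat.find_spec (exwalk v)
  have dmin : ∀ v p, D.UWalk ↑S r v p → d v ≤ p.length := by
    intro v p hp
    exact Nat.find_le ⟨p, hp, rfl⟩
  -- key step
  have keystep : ∀ v : V, v ≠ r → ∃ g ∈ S, ∃ w, d w < d v ∧
      ((D.tgt g = v ∧ D.src g = w) ∨ (D.src g = v ∧ D.tgt g = w)) := by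
    intro v hv
    obtain ⟨p, hp, hlen⟩ := dspec v
    have hpne : p ≠ [] := by
      rintro rfl; exact hv (hp.eq_of_nil).symm
    obtain ⟨q, g, rfl, hg, hcase⟩ := hp.eq_concat hpne
    have hql : q.length < d v := by
      rw [← hlen]; simp
    rcases hcase with ⟨h1, h2⟩ | ⟨h1, h2⟩
    · exact ⟨g, hg, D.src g, lt_of_le_of_lt (dmin _ _ h2) hql, .inl ⟨h1, rfl⟩⟩
    · exact ⟨g, hg, D.tgt g, lt_of_le_of_lt (dmin _ _ h2) hql, .inr ⟨h1, rfl⟩⟩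
  rcases subsingleton_or_nontrivial V with hV | hV
  · have : Fintype.card V ≤ 1 := Fintype.card_le_one_iff_subsingleton.2 hV
    omega
  · obtain ⟨v₀, hv₀⟩ := exists_ne r
    obtain ⟨e₀, _, _⟩ := keystep v₀ hv₀
    set f : V → E := fun v => if h : v = r then e₀ else Classical.choose (keystep v h) with hf
    have hfspec : ∀ v (h : v ≠ r), Classical.choose (keystep v h) ∈ S ∧
        ∃ w, d w < d v ∧ ((D.tgt (Classical.choose (keystep v h)) = v ∧
            D.src (Classical.choose (keystep v h)) = w) ∨
          (D.src (Classical.choose (keystep v h)) = v ∧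
            D.tgt (Classical.choose (keystep v h)) = w)) := by
      intro v h
      obtain ⟨hg, hw⟩ := Classical.choose_spec (keystep v h)
      exact ⟨hg, hw⟩
    have hcard : (Finset.univ.erase r).card ≤ S.card := by
      apply Finset.card_le_card_of_injOn f
      · intro v hv
        have hvne : v ≠ r := (Finset.mem_erase.1 hv).1
        simp only [hf, dif_neg hvne]
        exact (hfspec v hvne).1
      · intro v hv v' hv' heq
        by_contra hne
        have hvne : v ≠ r := (Finset.mem_erase.1 hv).1
        have hvne' : v' ≠ r := (Finset.mem_erase.1 hv').1
        simp only [hf, dif_neg hvne, dif_neg hvne'] at heq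
        obtain ⟨-, w, hw, hcase⟩ := hfspec v hvne
        obtain ⟨-, w', hw', hcase'⟩ := hfspec v' hvne'
        rw [heq] at hcase
        rcases hcase with ⟨h1, h2⟩ | ⟨h1, h2⟩ <;> rcases hcase' with ⟨h1', h2'⟩ | ⟨h1', h2'⟩
        · exact hne (h1.symm.trans h1')
        · rw [h1'] at h2; rw [h1] at h2'; subst h2 h2'; omega
        · rw [h1'] at h2; rw [h1] at h2'; subst h2 h2'; omega
        · exact hne (h1.symm.trans h1')
    have : (Finset.univ.erase r).card = Fintype.card V - 1 := by
      rw [Finset.card_erase_of_mem (Finset.mem_univ r), Finset.card_univ]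
    have hr : 1 ≤ Fintype.card V := Fintype.card_pos_iff.2 ⟨r⟩
    omega

end DigraphStr

namespace DigraphStr

variable {V E : Type} {D : DigraphStr V E}

/-- a spanning tree in which every vertex is reachable from `r` by a directed
path is an arborescence -/
theorem isArborescence_of_reach [Fintype V] [DecidableEq E] {T : Finset E}
    (hT : D.IsSpanningTree T) (r : V)
    (hreach : ∀ v, ∃ p, D.DPath ↑T r v p) : D.IsArborescence ↑T r := by
  classical
  set B : Finset V := Finset.univ.erase r with hB
  have inedge : ∀ v ∈ B, ∃ g, g ∈ T ∧ D.tgt g = v := by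
    intro v hv
    obtain ⟨p, hp⟩ := hreach v
    have hpne : p ≠ [] := by
      rintro rfl
      exact (Finset.mem_erase.1 hv).1 (hp.eq_of_nil).symm
    obtain ⟨q, g, rfl, hg, hgt, -⟩ := hp.eq_concat hpne
    exact ⟨g, hg, hgt⟩
  set f : ∀ v ∈ B, E := fun v hv => Classical.choose (inedge v hv) with hfdef
  have hfT : ∀ v hv, f v hv ∈ T := fun v hv => (Classical.choose_spec (inedge v hv)).1
  have hft : ∀ v hv, D.tgt (f v hv) = v := fun v hv => (Classical.choose_spec (inedge v hv)).2
  have hinj : ∀ v₁ v₂ hv₁ hv₂, f v₁ hv₁ = f v₂ hv₂ → v₁ = v₂ := by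
    intro v₁ v₂ hv₁ hv₂ h
    rw [← hft v₁ hv₁, ← hft v₂ hv₂, h]
  have hcard : T.card ≤ B.card := by
    have : B.card = Fintype.card V - 1 := by
      rw [hB, Finset.card_erase_of_mem (Finset.mem_univ r), Finset.card_univ]
    have h1 := hT.2
    omega
  have hsurj := Finset.surj_on_of_inj_on_of_card_le f hfT hinj hcard
  have ha : ∀ g ∈ T, D.tgt g ≠ r := by
    intro g hg
    obtain ⟨v, hv, rfl⟩ := hsurj g hg
    rw [hft v hv]
    exact (Finset.mem_erase.1 hv).1
  have hb : ∀ g ∈ T, ∀ g' ∈ T, D.tgt g = D.tgt g' → g = g' := by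
    intro g hg g' hg' htt
    obtain ⟨v, hv, rfl⟩ := hsurj g hg
    obtain ⟨v', hv', rfl⟩ := hsurj g' hg'
    rw [hft v hv, hft v' hv'] at htt
    subst htt
    rfl
  have hnil : ∀ q, D.DPath ↑T r r q → q = [] := by
    intro q hq
    by_contra hne
    obtain ⟨q', g, rfl, hg, hgt, -⟩ := hq.eq_concat hne
    exact ha g hg hgt
  have uniq : ∀ n (p q : List E) (v : V), p.length ≤ n →
      D.DPath ↑T r v p → D.DPath ↑T r v q → p = q := by
    intro n
    induction n with
    | zero =>
        intro p q v hl hp hq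
        have hp0 : p = [] := List.eq_nil_of_length_eq_zero (Nat.le_zero.1 hl)
        subst hp0
        have : r = v := hp.eq_of_nil
        subst this
        exact (hnil q hq).symm
    | succ n ih =>
        intro p q v hl hp hq
        by_cases hv : v = r
        · subst hv
          rw [hnil p hp, hnil q hq]
        · have hpne : p ≠ [] := by rintro rfl; exact hv hp.eq_of_nil.symm
          have hqne : q ≠ [] := by rintro rfl; exact hv hq.eq_of_nil.symm
          obtain ⟨p₁, g, rfl, hg, hgt, hp₁⟩ := hp.eq_concat hpne
          obtain ⟨q₁, g', rfl, hg', hgt', hq₁⟩ := hq.eq_concat hqne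
          have : g = g' := hb g hg g' hg' (hgt.trans hgt'.symm)
          subst this
          have hlen : p₁.length ≤ n := by
            have := hl; simp at this; omega
          rw [ih p₁ q₁ (D.src g) hlen hp₁ hq₁]
  intro v
  obtain ⟨p, hp⟩ := hreach v
  exact ⟨p, hp, fun q hq => uniq q.length q p v le_rfl hq hp⟩

/-- an arborescence is a spanning tree -/
theorem spanningTree_of_arb [Fintype V] [DecidableEq E] {A : Finset E} {r : V}
    (h : D.IsArborescence ↑A r) : D.IsSpanningTree A := by
  classical
  have hreach : ∀ v, ∃ p, D.DPath ↑A r v p := fun v => ((h v).exists)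
  set pa : V → List E := fun v => Classical.choose (hreach v) with hpa
  have hpath : ∀ v, D.DPath ↑A r v (pa v) := fun v => Classical.choose_spec (hreach v)
  have huniq : ∀ v p, D.DPath ↑A r v p → p = pa v := by
    intro v p hp
    obtain ⟨q, hq, hu⟩ := h v
    rw [hu p hp, hu (pa v) (hpath v)]
  have ha : ∀ e ∈ A, D.tgt e ≠ r := by
    intro e he hr
    have h1 : D.DPath ↑A r (D.tgt e) (pa (D.src e) ++ [e]) := (hpath (D.src e)).concat he
    rw [hr] at h1
    have h2 : D.DPath ↑A r r [] := .nil r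
    have := (huniq r _ h1).trans (huniq r _ h2).symm
    simp at this
  have hb : ∀ e ∈ A, ∀ e' ∈ A, D.tgt e = D.tgt e' → e = e' := by
    intro e he e' he' htt
    have h1 : D.DPath ↑A r (D.tgt e) (pa (D.src e) ++ [e]) := (hpath (D.src e)).concat he
    have h2 : D.DPath ↑A r (D.tgt e) (pa (D.src e') ++ [e']) := htt ▸ (hpath (D.src e')).concat he'
    have := (huniq _ _ h1).trans (huniq _ _ h2).symm
    have := congrArg List.reverse this
    simp at this
    exact this.1
  constructor
  · intro u v
    obtain ⟨p, hp⟩ := hreach u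
    obtain ⟨q, hq⟩ := hreach v
    exact ⟨p.reverse ++ q, (UWalk.of_dpath hp).reverse.append (UWalk.of_dpath hq)⟩
  · have : A.card = (Finset.univ.erase r).card := by
      apply Finset.card_bij (fun e _ => D.tgt e)
      · intro e he
        exact Finset.mem_erase.2 ⟨ha e he, Finset.mem_univ _⟩
      · intro e he e' he' htt
        exact hb e he e' he' htt
      · intro v hv
        have hvr : v ≠ r := (Finset.mem_erase.1 hv).1
        obtain ⟨p, hp⟩ := hreach v
        have hpne : p ≠ [] := by rintro rfl; exact hvr hp.eq_of_nil.symm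
        obtain ⟨q, g, rfl, hg, hgt, -⟩ := hp.eq_concat hpne
        exact ⟨g, hg, hgt⟩
    rw [this, Finset.card_erase_of_mem (Finset.mem_univ r), Finset.card_univ]
    have : 1 ≤ Fintype.card V := Fintype.card_pos_iff.2 ⟨r⟩
    omega

end DigraphStr



/-- A planar alternating dimap, encoded as an oriented combinatorial map: the
clockwise faces are directed cycles `cw 1, …, cw k` and the counterclockwise
faces are directed cycles `ccw 1, …, ccw m`; every edge lies on exactly one
cycle of each family, the underlying graph is connected, and Euler's formula
`|V| - |E| + (k + m) = 2` holds (genus zero, i.e. planarity). -/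
structure AltDimap (V E : Type) [Fintype V] [Fintype E] (k : ℕ) extends DigraphStr V E where
  m : ℕ
  cw : Fin k → List E
  ccw : Fin m → List E
  cw_cycle : ∀ i, toDigraphStr.IsDirCycle (cw i)
  ccw_cycle : ∀ j, toDigraphStr.IsDirCycle (ccw j)
  cw_partition : ∀ e : E, ∃! i : Fin k, e ∈ cw i
  ccw_partition : ∀ e : E, ∃! j : Fin m, e ∈ ccw j
  conn : toDigraphStr.Conn Set.univ
  euler : Fintype.card V + (k + m) = Fintype.card E + 2

open MvPolynomial in
open scoped Classical in
/-- The M-polynomial of an alternating dimap with root `r`: the generating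
polynomial, over spanning arborescences `A` rooted at `r`, of the numbers of
edges of `A` on each clockwise face cycle. -/
noncomputable def Mpoly {V E : Type} [Fintype V] [Fintype E] [DecidableEq E] {k : ℕ}
    (D : AltDimap V E k) (r : V) : MvPolynomial (Fin k) ℝ :=
  ∑ A ∈ Finset.univ.filter (fun A : Finset E => D.toDigraphStr.IsArborescence ↑A r),
    ∏ i : Fin k, (MvPolynomial.X i : MvPolynomial (Fin k) ℝ) ^
      (A.filter (fun e => e ∈ D.cw i)).card


namespace DigraphStr

variable {V E : Type} {D : DigraphStr V E}

/-- transport a predicate along a walk -/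
theorem UWalk.q_closed {T : Set E} {Q : V → Prop}
    (hF : ∀ g ∈ T, Q (D.src g) → Q (D.tgt g))
    (hB : ∀ g ∈ T, Q (D.tgt g) → Q (D.src g))
    {a b : V} {p : List E} (hw : D.UWalk T a b p) (ha : Q a) : Q b := by
  induction hw with
  | nil => exact ha
  | @consF u w e p' he hu _ ih => exact ih (hF _ he (by rw [hu]; exact ha))
  | @consB u w e p' he hu _ ih => exact ih (hB _ he (by rw [hu]; exact ha))

/-- a walk from inside a forward-closed set to outside it must contain a
backward crossing edge -/
theorem exists_crossing {T : Set E} {P : V → Prop}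
    (hclos : ∀ g ∈ T, P (D.src g) → P (D.tgt g))
    {a b : V} {p : List E} (hw : D.UWalk T a b p) (ha : P a) (hb : ¬ P b) :
    ∃ e ∈ T, P (D.tgt e) ∧ ¬ P (D.src e) := by
  induction hw with
  | nil => exact absurd ha hb
  | @consF u w e p' he hu _ ih => exact ih (hclos _ he (by rw [hu]; exact ha)) hb
  | @consB u w e p' he hu _ ih =>
      by_cases hs : P (D.src e)
      · exact ih hs hb
      · exact ⟨e, he, by rw [hu]; exact ha, hs⟩

end DigraphStr

open DigraphStr in
theorem AltDimap.exists_arb {V E : Type} [Fintype V] [Fintype E] [DecidableEq E] {k : ℕ}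
    (D : AltDimap V E k) (r : V) :
    ∀ (T : Finset E), D.toDigraphStr.IsSpanningTree T →
    ∃ A : Finset E, D.toDigraphStr.IsArborescence ↑A r ∧
      ∀ i : Fin k, (A.filter (fun e => e ∈ D.cw i)).card
        = (T.filter (fun e => e ∈ D.cw i)).card := by
  classical
  set G := D.toDigraphStr with hG
  set R : Finset E → V → Prop := fun S v => ∃ p, G.DPath ↑S r v p with hR
  set μ : Finset E → ℕ := fun S =>
    (Finset.univ.filter fun v => ¬ R S v).card * (Fintype.card E + 1) +
      (S.filter fun g => R S (G.tgt g)).card with hμ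
  suffices h : ∀ (n : ℕ) (T : Finset E), G.IsSpanningTree T → μ T = n →
      ∃ A : Finset E, G.IsArborescence ↑A r ∧
        ∀ i : Fin k, (A.filter (fun e => e ∈ D.cw i)).card
          = (T.filter (fun e => e ∈ D.cw i)).card by
    intro T hT; exact h (μ T) T hT rfl
  intro n
  induction n using Nat.strong_induction_on with
  | _ n ih =>
  intro T hT hn
  by_cases hall : ∀ v, R T v
  · exact ⟨T, isArborescence_of_reach hT r hall, fun i => rfl⟩
  push_neg at hall
  obtain ⟨v₀, hv₀⟩ := hall
  have hr : R T r := ⟨[], .nil r⟩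
  have hclosR : ∀ g ∈ (↑T : Set E), R T (G.src g) → R T (G.tgt g) := by
    rintro g hg ⟨p, hp⟩
    exact ⟨p ++ [g], hp.concat hg⟩
  -- find the crossing edge e
  obtain ⟨p₀, hw₀⟩ := hT.1 r v₀
  obtain ⟨e, heT, hte, hse⟩ := exists_crossing hclosR hw₀ hr hv₀
  have heT' : e ∈ T := heT
  -- Y : reachability avoiding e
  set Y : V → Prop := fun v => G.UReach ↑(T.erase e) r v with hY
  have hYF : ∀ g ∈ (↑(T.erase e) : Set E), ∀ u, Y u → G.UReach ↑(T.erase e) u (G.tgt g) →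
      True := fun _ _ _ _ _ => trivial
  have hYstepF : ∀ g, g ∈ T.erase e → Y (G.src g) → Y (G.tgt g) := by
    intro g hg h
    exact h.stepF (by exact_mod_cast hg)
  have hYstepB : ∀ g, g ∈ T.erase e → Y (G.tgt g) → Y (G.src g) := by
    intro g hg h
    exact h.stepB (by exact_mod_cast hg)
  -- directed paths from r avoid e
  have havoid : ∀ v (p : List E), G.DPath ↑T r v p → G.DPath ↑(T.erase e) r v p := by
    intro v p hp
    refine hp.of_mem fun g hg => ?_
    have hgT : g ∈ T := hp.mem_sub hg
    have : R T (G.src g) := hp.src_reach hg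
    have hge : g ≠ e := by rintro rfl; exact hse this
    exact_mod_cast Finset.mem_erase.2 ⟨hge, hgT⟩
  have hRY : ∀ v, R T v → Y v := by
    rintro v ⟨p, hp⟩
    exact ⟨p, UWalk.of_dpath (havoid v p hp)⟩
  have htY : Y (G.tgt e) := hRY _ hte
  have hrY : Y r := UReach.refl _ r
  have hseY : ¬ Y (G.src e) := by
    intro wY
    have hconn' : ∀ v, G.UReach ↑(T.erase e) r v := by
      intro v
      obtain ⟨q, hq⟩ := hT.1 r v
      refine UWalk.q_closed (Q := Y) ?_ ?_ hq hrY
      · intro g hg h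
        by_cases hge : g = e
        · subst hge; exact htY
        · exact hYstepF g (Finset.mem_erase.2 ⟨hge, hg⟩) h
      · intro g hg h
        by_cases hge : g = e
        · subst hge; exact wY
        · exact hYstepB g (Finset.mem_erase.2 ⟨hge, hg⟩) h
    have hle := card_le_of_conn (D := G) (T.erase e) r hconn'
    rw [Finset.card_erase_of_mem heT'] at hle
    have h2 := hT.2
    have h3 : 1 ≤ T.card := Finset.card_pos.2 ⟨e, heT'⟩
    omega
  -- the replacement edge f on the same cw cycle
  obtain ⟨i, hi, -⟩ := D.cw_partition e
  obtain ⟨cne, cnd, ccyc⟩ := D.cw_cycle i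
  set c : List E := D.cw i with hc
  set L : ℕ := c.length with hL'
  have hL : 0 < L := List.length_pos_of_ne_nil cne
  obtain ⟨pp, hpp⟩ := List.mem_iff_get.1 hi
  set idx : ℕ → E := fun j => c.get ⟨(pp.val + j) % L, Nat.mod_lt _ hL⟩ with hidx
  have hget : ∀ (a b : ℕ) (h : a < L) (h' : b < L), a = b →
      c.get ⟨a, h⟩ = c.get ⟨b, h'⟩ := by
    intro a b h h' hab; subst hab; rfl
  have hsucc : ∀ j, G.src (idx (j + 1)) = G.tgt (idx j) := by
    intro j
    have h := ccyc ⟨(pp.val + j) % L, Nat.mod_lt _ hL⟩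
    have hmod : ((pp.val + j) % L + 1) % L = (pp.val + (j + 1)) % L := by
      conv_rhs => rw [← Nat.add_assoc]
      rw [Nat.mod_add_mod]
    have h2 : c.get ⟨((pp.val + j) % L + 1) % L, Nat.mod_lt _ hL⟩
        = c.get ⟨(pp.val + (j + 1)) % L, Nat.mod_lt _ hL⟩ := hget _ _ _ _ hmod
    show G.src (c.get ⟨(pp.val + (j + 1)) % L, Nat.mod_lt _ hL⟩)
        = G.tgt (c.get ⟨(pp.val + j) % L, Nat.mod_lt _ hL⟩)
    rw [← h2]
    exact h.symm
  have hidx0 : idx 0 = e := by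
    show c.get ⟨(pp.val + 0) % L, Nat.mod_lt _ hL⟩ = e
    rw [hget _ pp.val (Nat.mod_lt _ hL) pp.isLt (by simp only [Nat.add_zero]; exact Nat.mod_eq_of_lt pp.isLt)]
    rw [Fin.eta]
    exact hpp
  have hlast : G.tgt (idx (L - 1)) = G.src e := by
    have h := hsucc (L - 1)
    have hL1 : L - 1 + 1 = L := by omega
    rw [hL1] at h
    have hLL : idx L = idx 0 := by
      show c.get ⟨(pp.val + L) % L, Nat.mod_lt _ hL⟩
          = c.get ⟨(pp.val + 0) % L, Nat.mod_lt _ hL⟩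
      exact hget _ _ _ _ (by rw [Nat.add_mod_right]; simp)
    rw [hLL, hidx0] at h
    exact h.symm
  have hex : ∃ j, ¬ Y (G.tgt (idx j)) := ⟨L - 1, by rw [hlast]; exact hseY⟩
  set j₀ : ℕ := Nat.find hex with hj₀def
  have hj₀ : ¬ Y (G.tgt (idx j₀)) := Nat.find_spec hex
  have hj₀min : ∀ j < j₀, Y (G.tgt (idx j)) := by
    intro j hj
    by_contra h
    have h2 := Nat.find_min' hex h
    rw [← hj₀def] at h2
    omega
  have hj₀pos : 0 < j₀ := by
    rcases Nat.eq_zero_or_pos j₀ with h | h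
    · rw [h, hidx0] at hj₀; exact absurd htY hj₀
    · exact h
  obtain ⟨f, hf⟩ : ∃ f : E, f = idx j₀ := ⟨_, rfl⟩
  have hsfY : Y (G.src f) := by
    have h1 : j₀ - 1 + 1 = j₀ := by omega
    have := hsucc (j₀ - 1)
    rw [h1] at this
    rw [hf, this]
    exact hj₀min (j₀ - 1) (by omega)
  have htfY : ¬ Y (G.tgt f) := by rw [hf]; exact hj₀
  have hfc : f ∈ D.cw i := by
    rw [hf]
    show c.get ⟨(pp.val + j₀) % L, Nat.mod_lt _ hL⟩ ∈ c
    exact List.get_mem _ _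
  have hfe : f ≠ e := by
    rintro rfl
    exact hseY hsfY
  have hfT : f ∉ T := by
    intro hfT
    exact htfY (hYstepF f (Finset.mem_erase.2 ⟨hfe, hfT⟩) hsfY)
  -- the new tree
  set T' : Finset E := insert f (T.erase e) with hT'def
  have hfTe : f ∉ T.erase e := fun h => hfT (Finset.mem_of_mem_erase h)
  have hcard' : T'.card = T.card := by
    rw [hT'def, Finset.card_insert_of_notMem hfTe, Finset.card_erase_of_mem heT']
    have : 1 ≤ T.card := Finset.card_pos.2 ⟨e, heT'⟩
    omega
  have hsubTe : (↑(T.erase e) : Set E) ⊆ ↑T' := by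
    intro x hx
    exact_mod_cast Finset.mem_insert_of_mem (by exact_mod_cast hx)
  have hfT' : f ∈ T' := Finset.mem_insert_self _ _
  -- connectivity of T'
  have claimA : ∀ v, Y v ∨ G.UReach ↑(T.erase e) (G.src e) v := by
    intro v
    obtain ⟨q, hq⟩ := hT.1 r v
    refine UWalk.q_closed (Q := fun v => Y v ∨ G.UReach ↑(T.erase e) (G.src e) v) ?_ ?_ hq
      (Or.inl hrY)
    · intro g hg h
      by_cases hge : g = e
      · subst hge; exact Or.inl htY
      · rcases h with h | h
        · exact Or.inl (hYstepF g (Finset.mem_erase.2 ⟨hge, hg⟩) h)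
        · exact Or.inr (h.stepF (by exact_mod_cast Finset.mem_erase.2 ⟨hge, hg⟩))
    · intro g hg h
      by_cases hge : g = e
      · subst hge; exact Or.inr (UReach.refl _ _)
      · rcases h with h | h
        · exact Or.inl (hYstepB g (Finset.mem_erase.2 ⟨hge, hg⟩) h)
        · exact Or.inr (h.stepB (by exact_mod_cast Finset.mem_erase.2 ⟨hge, hg⟩))
  have reachT' : ∀ v, G.UReach ↑T' r v := by
    intro v
    rcases claimA v with h | h
    · exact h.mono hsubTe
    · have h1 : G.UReach ↑T' r (G.tgt f) := (hsfY.mono hsubTe).stepF (by exact_mod_cast hfT')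
      have h2 : G.UReach ↑(T.erase e) (G.src e) (G.tgt f) := by
        rcases claimA (G.tgt f) with h' | h'
        · exact absurd h' htfY
        · exact h'
      exact h1.trans ((h2.mono hsubTe).symm.trans (h.mono hsubTe))
  have hST' : G.IsSpanningTree T' := by
    refine ⟨fun u v => ?_, by rw [hcard']; exact hT.2⟩
    obtain ⟨p1, hp1⟩ := (reachT' u).symm.trans (reachT' v)
    exact ⟨p1, hp1⟩
  -- statistics are preserved
  have hstats : ∀ i' : Fin k, (T'.filter (fun x => x ∈ D.cw i')).card
      = (T.filter (fun x => x ∈ D.cw i')).card := by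
    intro i'
    have hie : e ∈ D.cw i := hi
    by_cases hii : i' = i
    · rw [hii]
      have hfnot : f ∉ (Finset.filter (fun x => x ∈ D.cw i) T).erase e := by
        intro h
        exact hfT (Finset.mem_of_mem_filter _ (Finset.mem_of_mem_erase h))
      have hseteq : T'.filter (fun x => x ∈ D.cw i)
          = insert f ((T.filter (fun x => x ∈ D.cw i)).erase e) := by
        ext x
        simp only [hT'def, Finset.mem_filter, Finset.mem_insert, Finset.mem_erase]
        constructor
        · rintro ⟨h1 | h1, h2⟩
          · exact Or.inl h1
          · exact Or.inr ⟨h1.1, h1.2, h2⟩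
        · rintro (rfl | ⟨h1, h2, h3⟩)
          · exact ⟨Or.inl rfl, hfc⟩
          · exact ⟨Or.inr ⟨h1, h2⟩, h3⟩
      have hmem : e ∈ T.filter (fun x => x ∈ D.cw i) := Finset.mem_filter.2 ⟨heT', hie⟩
      rw [hseteq, Finset.card_insert_of_notMem hfnot, Finset.card_erase_of_mem hmem]
      exact Nat.succ_pred_eq_of_pos (Finset.card_pos.2 ⟨e, hmem⟩)
    · have hei' : e ∉ D.cw i' := by
        intro h
        obtain ⟨i₁, -, huniq⟩ := D.cw_partition e
        exact hii ((huniq i' h).trans (huniq i hie).symm)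
      have hfi' : f ∉ D.cw i' := by
        intro h
        obtain ⟨i₁, -, huniq⟩ := D.cw_partition f
        exact hii ((huniq i' h).trans (huniq i hfc).symm)
      congr 1
      ext x
      simp only [hT'def, Finset.mem_filter, Finset.mem_insert, Finset.mem_erase]
      constructor
      · rintro ⟨rfl | ⟨h1, h2⟩, h3⟩
        · exact absurd h3 hfi'
        · exact ⟨h2, h3⟩
      · rintro ⟨h1, h2⟩
        refine ⟨Or.inr ⟨?_, h1⟩, h2⟩
        rintro rfl
        exact hei' h2
  -- measure decreases
  have hRR' : ∀ v, R T v → R T' v := by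
    rintro v ⟨p, hp⟩
    have hp' := havoid v p hp
    exact ⟨p, hp'.of_mem fun g hg => hsubTe (hp'.mem_sub hg)⟩
  have htfR : ¬ R T (G.tgt f) := fun h => htfY (hRY _ h)
  have key : μ T' < μ T := by
    by_cases hsub : ∀ v, R T' v → R T v
    · -- same reach set, second component drops
      have hiff : ∀ v, R T' v ↔ R T v := fun v => ⟨hsub v, hRR' v⟩
      have hcnt : (Finset.univ.filter fun v => ¬ R T' v).card
          = (Finset.univ.filter fun v => ¬ R T v).card := by
        congr 1
        apply Finset.filter_congr
        intro v _
        simp [hiff v]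
      have htfR' : ¬ R T' (G.tgt f) := fun h => htfR (hsub _ h)
      have hpsi : (T'.filter fun g => R T' (G.tgt g)).card
          = (T.filter fun g => R T (G.tgt g)).card - 1 := by
        have h1 : (T'.filter fun g => R T' (G.tgt g))
            = (T.filter fun g => R T (G.tgt g)).erase e := by
          ext g
          simp only [hT'def, Finset.mem_filter, Finset.mem_insert, Finset.mem_erase]
          constructor
          · rintro ⟨rfl | ⟨h1, h2⟩, h3⟩
            · exact absurd h3 htfR'
            · exact ⟨h1, h2, (hiff _).1 h3⟩
          · rintro ⟨h1, h2, h3⟩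
            exact ⟨Or.inr ⟨h1, h2⟩, (hiff _).2 h3⟩
        rw [h1, Finset.card_erase_of_mem (Finset.mem_filter.2 ⟨heT', hte⟩)]
      have hepos : 1 ≤ (T.filter fun g => R T (G.tgt g)).card :=
        Finset.card_pos.2 ⟨e, Finset.mem_filter.2 ⟨heT', hte⟩⟩
      rw [hμ]
      simp only
      rw [hcnt, hpsi]
      omega
    · -- reach set grows
      push_neg at hsub
      obtain ⟨v₁, hv₁, hv₁'⟩ := hsub
      have hsubset : (Finset.univ.filter fun v => ¬ R T' v)
          ⊂ (Finset.univ.filter fun v => ¬ R T v) := by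
        refine ⟨fun x hx => ?_, fun hcon => ?_⟩
        · simp only [Finset.mem_filter] at hx ⊢
          exact ⟨hx.1, fun h => hx.2 (hRR' _ h)⟩
        ·
          have := hcon (Finset.mem_filter.2 ⟨Finset.mem_univ v₁, hv₁'⟩)
          simp only [Finset.mem_filter] at this
          exact this.2 hv₁
      have hcnt : (Finset.univ.filter fun v => ¬ R T' v).card
          < (Finset.univ.filter fun v => ¬ R T v).card := Finset.card_lt_card hsubset
      have hpsibd : (T'.filter fun g => R T' (G.tgt g)).card ≤ Fintype.card E := by
        calc (T'.filter fun g => R T' (G.tgt g)).card ≤ T'.card := Finset.card_filter_le _ _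
        _ ≤ Fintype.card E := by rw [← Finset.card_univ]; exact Finset.card_le_univ _
      rw [hμ]
      simp only
      set a := (Finset.univ.filter fun v => ¬ R T' v).card
      set b := (Finset.univ.filter fun v => ¬ R T v).card
      set cE := Fintype.card E
      calc a * (cE + 1) + (T'.filter fun g => R T' (G.tgt g)).card
          ≤ a * (cE + 1) + cE := by omega
        _ < (a + 1) * (cE + 1) := by ring_nf; omega
        _ ≤ b * (cE + 1) := Nat.mul_le_mul_right _ (by omega)
        _ ≤ b * (cE + 1) + (T.filter fun g => R T (G.tgt g)).card := Nat.le_add_right _ _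
  obtain ⟨A, hA, hAstats⟩ := ih (μ T') (by omega) T' hST' rfl
  exact ⟨A, hA, fun i' => (hAstats i').trans (hstats i')⟩


open MvPolynomial in
theorem AltDimap.mpoly_support_iff {V E : Type} [Fintype V] [Fintype E] [DecidableEq E] {k : ℕ}
    (D : AltDimap V E k) (r : V) (α : Fin k →₀ ℕ) :
    α ∈ (Mpoly D r).support ↔
      ∃ T : Finset E, D.toDigraphStr.IsSpanningTree T ∧
        ∀ i : Fin k, α i = (T.filter (fun e => e ∈ D.cw i)).card := by
  classical
  set statF : Finset E → (Fin k →₀ ℕ) := fun A =>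
    Finsupp.onFinset Finset.univ (fun i => (A.filter (fun e => e ∈ D.cw i)).card)
      (fun _ _ => Finset.mem_univ _) with hstatF
  have hstatF_apply : ∀ A i, statF A i = (A.filter (fun e => e ∈ D.cw i)).card := by
    intro A i
    simp [hstatF]
  have hmono : ∀ A : Finset E,
      (∏ i : Fin k, (X i : MvPolynomial (Fin k) ℝ) ^ (A.filter (fun e => e ∈ D.cw i)).card)
        = monomial (statF A) (1 : ℝ) := by
    intro A
    rw [monomial_eq, C_1, one_mul,
      Finsupp.prod_fintype _ _ (fun i => pow_zero (X i : MvPolynomial (Fin k) ℝ))]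
    exact Finset.prod_congr rfl fun i _ => by rw [hstatF_apply]
  have hcoeff : coeff α (Mpoly D r)
      = (((Finset.univ.filter (fun A : Finset E =>
          D.toDigraphStr.IsArborescence ↑A r)).filter (fun A => statF A = α)).card : ℝ) := by
    unfold Mpoly
    rw [coeff_sum]
    rw [Finset.sum_congr rfl (fun A _ => by rw [hmono A, coeff_monomial])]
    rw [Finset.sum_boole]
  rw [MvPolynomial.mem_support_iff, hcoeff]
  rw [Ne, Nat.cast_eq_zero, Finset.card_eq_zero, ← Ne, ← Finset.nonempty_iff_ne_empty]
  constructor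
  · rintro ⟨A, hA⟩
    simp only [Finset.mem_filter, Finset.mem_univ, true_and] at hA
    obtain ⟨hAarb, hAstat⟩ := hA
    refine ⟨A, DigraphStr.spanningTree_of_arb hAarb, fun i => ?_⟩
    rw [← hAstat, hstatF_apply]
  · rintro ⟨T, hT, hTstat⟩
    obtain ⟨A, hAarb, hAstats⟩ := D.exists_arb r T hT
    refine ⟨A, ?_⟩
    simp only [Finset.mem_filter, Finset.mem_univ, true_and]
    refine ⟨hAarb, ?_⟩
    ext i
    rw [hstatF_apply, hAstats i, ← hTstat i]

/-- The support of the M-polynomial is independent of the root, and equals the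
set of tuples of cycle-statistics of spanning trees of the underlying graph. -/
theorem stmt7 {V E : Type} [Fintype V] [Fintype E] [DecidableEq E] {k : ℕ}
    (D : AltDimap V E k) (r r' : V) :
    (Mpoly D r).support = (Mpoly D r').support ∧
    ∀ α : Fin k →₀ ℕ, α ∈ (Mpoly D r).support ↔
      ∃ T : Finset E, D.toDigraphStr.IsSpanningTree T ∧
        ∀ i : Fin k, α i = (T.filter (fun e => e ∈ D.cw i)).card := by
  constructor
  · ext α
    rw [D.mpoly_support_iff r α, D.mpoly_support_iff r' α]
  · exact fun α => D.mpoly_support_iff r α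
end

section
/- Let f = Σ_{m=0}^d c_m t^m q^{d−m} be a homogeneous bivariate polynomial with nonnegative coefficients whose normalization N(f) = Σ_m c_m t^m q^{d−m} / (m!(d−m)!) is Lorentzian. Then the univariate polynomial f(t,1) = Σ_m c_m t^m has log-concave coefficient sequence with no internal zeros, and in particular the sequence (c_m) is unimodal. -/
open MvPolynomial

/-- M-convexity of a set of exponent vectors. -/
def MConvex {σ : Type*} (J : Set (σ →₀ ℕ)) : Prop :=
  ∀ α ∈ J, ∀ β ∈ J, ∀ i : σ, β i < α i →
    ∃ j : σ, α j < β j ∧ (α - Finsupp.single i 1 + Finsupp.single j 1) ∈ J ∧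
      (β - Finsupp.single j 1 + Finsupp.single i 1) ∈ J

/-- Hessian matrix of a polynomial (entries are constant terms of second derivatives). -/
noncomputable def hessMv {n : ℕ} (f : MvPolynomial (Fin n) ℝ) : Matrix (Fin n) (Fin n) ℝ :=
  fun i j => (MvPolynomial.pderiv i (MvPolynomial.pderiv j f)).coeff 0

/-- A real symmetric matrix has at most one positive eigenvalue. -/
def AtMostOnePosEig {n : ℕ} (H : Matrix (Fin n) (Fin n) ℝ) : Prop :=
  ∃ hH : H.IsHermitian, (Finset.univ.filter fun i => 0 < hH.eigenvalues i).card ≤ 1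

/-- Lorentzian polynomials of degree `d` in `n` variables (Brändén–Huh). -/
def Lorentzian {n : ℕ} : ℕ → MvPolynomial (Fin n) ℝ → Prop
  | 0, f => f.IsHomogeneous 0 ∧ ∀ m, 0 ≤ f.coeff m
  | 1, f => f.IsHomogeneous 1 ∧ ∀ m, 0 ≤ f.coeff m
  | 2, f => f.IsHomogeneous 2 ∧ (∀ m, 0 ≤ f.coeff m) ∧ MConvex ((f.support : Finset (Fin n →₀ ℕ)) : Set (Fin n →₀ ℕ)) ∧
      AtMostOnePosEig (hessMv f)
  | (d+3), f => f.IsHomogeneous (d+3) ∧ (∀ m, 0 ≤ f.coeff m) ∧ MConvex ((f.support : Finset (Fin n →₀ ℕ)) : Set (Fin n →₀ ℕ)) ∧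
      ∀ i, Lorentzian (d+2) (MvPolynomial.pderiv i f)

/-- The normalization operator `N(x^α) = x^α/α!`. -/
noncomputable def normalizeMv {n : ℕ} (f : MvPolynomial (Fin n) ℝ) : MvPolynomial (Fin n) ℝ :=
  ∑ α ∈ f.support, MvPolynomial.monomial α (f.coeff α / (α.prod fun _ m => (Nat.factorial m : ℝ)))

lemma fs_decomp (α : Fin 2 →₀ ℕ) :
    α = Finsupp.single 0 (α 0) + Finsupp.single 1 (α 1) := by
  ext x
  fin_cases x <;> simp [Finsupp.single_apply]

lemma e_app0 (a b : ℕ) : (Finsupp.single (0:Fin 2) a + Finsupp.single (1:Fin 2) b) 0 = a := by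
  simp [Finsupp.single_apply]

lemma e_app1 (a b : ℕ) : (Finsupp.single (0:Fin 2) a + Finsupp.single (1:Fin 2) b) 1 = b := by
  simp [Finsupp.single_apply]

lemma coeff_pderiv (i : Fin 2) (f : MvPolynomial (Fin 2) ℝ) (α : Fin 2 →₀ ℕ) :
    (pderiv i f).coeff α = f.coeff (α + Finsupp.single i 1) * ((α i : ℝ) + 1) := by
  induction f using MvPolynomial.induction_on' with
  | monomial s a =>
    rw [pderiv_monomial, coeff_monomial, coeff_monomial]
    by_cases h : s = α + Finsupp.single i 1
    · subst h
      rw [if_pos (add_tsub_cancel_right _ _), if_pos rfl]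
      simp
    · rw [if_neg h]
      by_cases h2 : s - Finsupp.single i 1 = α
      · rw [if_pos h2]
        rcases Nat.eq_zero_or_pos (s i) with hsi | hsi
        · simp [hsi]
        · exfalso
          apply h
          rw [← h2]
          ext j
          rcases eq_or_ne j i with rfl | hj
          · simp [Finsupp.tsub_apply]
            omega
          · simp [Finsupp.tsub_apply, Finsupp.single_apply, hj, Ne.symm hj]
      · rw [if_neg h2]; ring
  | add p q hp hq => simp [hp, hq, add_mul]

lemma coeff_pderiv_iter (i : Fin 2) (k : ℕ) (f : MvPolynomial (Fin 2) ℝ) (α : Fin 2 →₀ ℕ) :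
    ((pderiv i)^[k] f).coeff α
      = f.coeff (α + Finsupp.single i k) * ∏ j ∈ Finset.range k, ((α i : ℝ) + j + 1) := by
  induction k generalizing f α with
  | zero => simp
  | succ k ih =>
    rw [Function.iterate_succ_apply', coeff_pderiv, ih]
    have h1 : α + Finsupp.single i 1 + Finsupp.single i k = α + Finsupp.single i (k + 1) := by
      rw [add_assoc, ← Finsupp.single_add, add_comm 1 k]
    have h2 : ((α + Finsupp.single i 1 : Fin 2 →₀ ℕ)) i = α i + 1 := by simp
    rw [h1, h2, Finset.prod_range_succ']
    push_cast
    have h3 : ∀ j ∈ Finset.range k, ((α i : ℝ) + 1 + j + 1) = ((α i : ℝ) + (j + 1 : ℕ) + 1) := by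
      intro j _; push_cast; ring
    rw [Finset.prod_congr rfl h3]
    push_cast
    ring

lemma fact_prod (a k : ℕ) :
    (a.factorial : ℝ) * ∏ j ∈ Finset.range k, ((a : ℝ) + j + 1) = ((a + k).factorial : ℝ) := by
  induction k with
  | zero => simp
  | succ k ih =>
    rw [Finset.prod_range_succ, ← mul_assoc, ih]
    have : a + (k + 1) = (a + k) + 1 := by omega
    rw [this, Nat.factorial_succ]
    push_cast
    ring

lemma coeff_normalizeMv {n : ℕ} (f : MvPolynomial (Fin n) ℝ) (α : Fin n →₀ ℕ) :
    (normalizeMv f).coeff α = f.coeff α / (α.prod fun _ m => (m.factorial : ℝ)) := by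
  rw [normalizeMv, MvPolynomial.coeff_sum]
  simp only [coeff_monomial]
  rw [Finset.sum_ite_eq' f.support α]
  by_cases h : α ∈ f.support
  · rw [if_pos h]
  · rw [if_neg h, MvPolynomial.notMem_support_iff.mp h, zero_div]

noncomputable def bivar (d : ℕ) (c : ℕ → ℝ) : MvPolynomial (Fin 2) ℝ :=
  ∑ m ∈ Finset.range (d + 1), MvPolynomial.monomial
    (Finsupp.single (0 : Fin 2) m + Finsupp.single (1 : Fin 2) (d - m)) (c m)

lemma coeff_bivar (d : ℕ) (c : ℕ → ℝ) (α : Fin 2 →₀ ℕ) :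
    (bivar d c).coeff α = if α 0 + α 1 = d then c (α 0) else 0 := by
  rw [bivar, MvPolynomial.coeff_sum]
  simp only [coeff_monomial]
  by_cases h : α 0 + α 1 = d
  · rw [if_pos h, Finset.sum_eq_single (α 0)]
    · rw [if_pos]
      have hd : d - α 0 = α 1 := by omega
      rw [hd]
      exact (fs_decomp α).symm
    · intro b hb hne
      rw [if_neg]
      intro hEq
      apply hne
      have h0 := congrArg (fun f : Fin 2 →₀ ℕ => f 0) hEq
      simpa [e_app0] using h0
    · intro habs
      exact absurd (Finset.mem_range.mpr (by omega)) habs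
  · rw [if_neg h]
    apply Finset.sum_eq_zero
    intro m hm
    rw [if_neg]
    intro hEq
    apply h
    have h0 := congrArg (fun f : Fin 2 →₀ ℕ => f 0) hEq
    have h1 := congrArg (fun f : Fin 2 →₀ ℕ => f 1) hEq
    simp only [e_app0, e_app1] at h0 h1
    rw [Finset.mem_range] at hm
    omega

lemma coeff_ng (d : ℕ) (c : ℕ → ℝ) (α : Fin 2 →₀ ℕ) :
    (normalizeMv (bivar d c)).coeff α =
      (if α 0 + α 1 = d then c (α 0) else 0) / (((α 0).factorial : ℝ) * ((α 1).factorial : ℝ)) := by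
  rw [coeff_normalizeMv, coeff_bivar]
  congr 1
  rw [Finsupp.prod_fintype _ _ (fun i => by simp)]
  exact Fin.prod_univ_two _

lemma mem_supp_ng {d : ℕ} {c : ℕ → ℝ} {α : Fin 2 →₀ ℕ} :
    α ∈ (normalizeMv (bivar d c)).support ↔ (α 0 + α 1 = d ∧ c (α 0) ≠ 0) := by
  rw [MvPolynomial.mem_support_iff, coeff_ng]
  constructor
  · intro h
    by_cases hd : α 0 + α 1 = d
    · refine ⟨hd, fun h0 => ?_⟩
      rw [if_pos hd, h0, zero_div] at h
      exact h rfl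
    · rw [if_neg hd, zero_div] at h
      exact absurd rfl h
  · rintro ⟨hd, hc⟩
    rw [if_pos hd]
    apply div_ne_zero hc
    positivity

lemma lorentzian_iter {n : ℕ} (i : Fin n) (k : ℕ) :
    ∀ (m : ℕ) (f : MvPolynomial (Fin n) ℝ), Lorentzian (m + 2 + k) f →
      Lorentzian (m + 2) ((pderiv i)^[k] f) := by
  induction k with
  | zero => intro m f h; simpa using h
  | succ k ih =>
    intro m f h
    rw [Function.iterate_succ_apply']
    have h' : Lorentzian (m + 1 + 2 + k) f := by
      have e : m + 1 + 2 + k = m + 2 + (k + 1) := by omega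
      rw [e]; exact h
    have h2 : Lorentzian (m + 3) ((pderiv i)^[k] f) := by
      have e : m + 1 + 2 = m + 3 := by omega
      rw [← e]; exact ih (m + 1) f h'
    exact h2.2.2.2 i

lemma coeff_iter2 (r s : ℕ) (c : ℕ → ℝ) (a b : ℕ) (hab : a + b = 2) :
    ((pderiv 1)^[s] ((pderiv 0)^[r] (normalizeMv (bivar (r + s + 2) c)))).coeff
      (Finsupp.single 0 a + Finsupp.single 1 b)
      = c (a + r) / ((a.factorial : ℝ) * (b.factorial : ℝ)) := by
  rw [coeff_pderiv_iter, coeff_pderiv_iter, coeff_ng]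
  have hp1 : (Finsupp.single (0:Fin 2) a + Finsupp.single (1:Fin 2) b) + Finsupp.single 1 s
      = Finsupp.single (0:Fin 2) a + Finsupp.single (1:Fin 2) (b + s) := by
    ext x; fin_cases x <;> simp [Finsupp.single_apply]
  rw [hp1]
  have hp2 : (Finsupp.single (0:Fin 2) a + Finsupp.single (1:Fin 2) (b + s)) + Finsupp.single 0 r
      = Finsupp.single (0:Fin 2) (a + r) + Finsupp.single (1:Fin 2) (b + s) := by
    ext x; fin_cases x <;> simp [Finsupp.single_apply]
  rw [hp2]
  rw [e_app0, e_app1, e_app0, e_app1]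
  rw [if_pos (by omega : (a + r) + (b + s) = r + s + 2)]
  have f1 := fact_prod a r
  have f2 := fact_prod b s
  rw [← f1, ← f2]
  have hP1 : (0:ℝ) < ∏ j ∈ Finset.range r, ((a : ℝ) + j + 1) :=
    Finset.prod_pos fun j _ => by positivity
  have hP2 : (0:ℝ) < ∏ j ∈ Finset.range s, ((b : ℝ) + j + 1) :=
    Finset.prod_pos fun j _ => by positivity
  have ha : (0:ℝ) < a.factorial := by positivity
  have hb : (0:ℝ) < b.factorial := by positivity
  field_simp

lemma hessMv_apply (f : MvPolynomial (Fin 2) ℝ) (i j : Fin 2) :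
    hessMv f i j = f.coeff (Finsupp.single i 1 + Finsupp.single j 1) *
      (((Finsupp.single i 1 : Fin 2 →₀ ℕ) j : ℝ) + 1) := by
  show (pderiv i (pderiv j f)).coeff 0 = _
  rw [coeff_pderiv, coeff_pderiv]
  simp

lemma det_le_zero {H : Matrix (Fin 2) (Fin 2) ℝ} (hsym : H 0 1 = H 1 0)
    (h00 : 0 ≤ H 0 0) (h11 : 0 ≤ H 1 1) (hpe : AtMostOnePosEig H) :
    H.det ≤ 0 := by
  by_contra hlt
  push_neg at hlt
  rw [Matrix.det_fin_two] at hlt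
  obtain ⟨hH, hcard⟩ := hpe
  have hpd : H.PosDef := by
    refine ⟨hH, fun x hx => ?_⟩
    have hx' : x 0 ≠ 0 ∨ x 1 ≠ 0 := by
      by_contra hcon
      push_neg at hcon
      apply hx
      ext t
      fin_cases t
      · simpa using hcon.1
      · simpa using hcon.2
    have expand : (x.sum fun i xi ↦ x.sum fun j xj ↦ star xi * H i j * xj)
        = H 0 0 * (x 0 * x 0) + H 0 1 * (x 0 * x 1) + H 1 0 * (x 1 * x 0)
          + H 1 1 * (x 1 * x 1) := by
      simp [Finsupp.sum_fintype, Fin.sum_univ_two]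
      ring
    rw [expand, hsym]
    have hlt' : 0 < H 0 0 * H 1 1 - H 1 0 * H 1 0 := by rw [hsym] at hlt; exact hlt
    have h00' : 0 < H 0 0 := by
      rcases eq_or_lt_of_le h00 with hq | hq
      · exfalso; rw [← hq] at hlt'; nlinarith [mul_self_nonneg (H 1 0)]
      · exact hq
    rcases eq_or_ne (x 1) 0 with h1 | h1
    · have h0 : x 0 ≠ 0 := by tauto
      rw [h1]
      have := mul_self_pos.mpr h0
      nlinarith
    · nlinarith [mul_self_nonneg (H 0 0 * x 0 + H 1 0 * x 1),
        mul_pos hlt' (mul_self_pos.mpr h1), mul_self_nonneg (x 0)]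
  have hpos : ∀ i : Fin 2, 0 < hH.eigenvalues i := fun i => hpd.eigenvalues_pos i
  have hfull : (Finset.univ.filter fun i => 0 < hH.eigenvalues i) = Finset.univ :=
    Finset.filter_true_of_mem fun i _ => hpos i
  rw [hfull] at hcard
  simp at hcard

lemma logconc {d : ℕ} (c : ℕ → ℝ) (hc : ∀ m, 0 ≤ c m)
    (hL : Lorentzian d (normalizeMv (bivar d c))) :
    ∀ m : ℕ, 0 < m → m < d → c (m - 1) * c (m + 1) ≤ c m ^ 2 := by
  intro m hm hmd
  obtain ⟨r, rfl⟩ : ∃ r, m = r + 1 := ⟨m - 1, by omega⟩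
  obtain ⟨s, hd⟩ : ∃ s, d = r + s + 2 := ⟨d - r - 2, by omega⟩
  subst hd
  have L1 : Lorentzian (s + 2 + r) (normalizeMv (bivar (r + s + 2) c)) := by
    rw [show s + 2 + r = r + s + 2 by omega]; exact hL
  have L2 := lorentzian_iter (0 : Fin 2) r s _ L1
  have L3 : Lorentzian 2
      ((pderiv (1:Fin 2))^[s] ((pderiv (0:Fin 2))^[r] (normalizeMv (bivar (r + s + 2) c)))) := by
    have := lorentzian_iter (1 : Fin 2) s 0 _
      (by rw [show 0 + 2 + s = s + 2 by omega]; exact L2)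
    simpa using this
  have hpe : AtMostOnePosEig (hessMv
      ((pderiv (1:Fin 2))^[s] ((pderiv (0:Fin 2))^[r] (normalizeMv (bivar (r + s + 2) c))))) :=
    L3.2.2.2
  have e00 : hessMv ((pderiv (1:Fin 2))^[s] ((pderiv (0:Fin 2))^[r]
      (normalizeMv (bivar (r + s + 2) c)))) 0 0 = c (2 + r) := by
    rw [hessMv_apply]
    rw [show (Finsupp.single (0:Fin 2) 1 + Finsupp.single (0:Fin 2) 1)
        = Finsupp.single (0:Fin 2) 2 + Finsupp.single (1:Fin 2) 0 by
      ext x; fin_cases x <;> simp [Finsupp.single_apply]]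
    rw [coeff_iter2 r s c 2 0 rfl]
    norm_num [Nat.factorial]
  have e01 : hessMv ((pderiv (1:Fin 2))^[s] ((pderiv (0:Fin 2))^[r]
      (normalizeMv (bivar (r + s + 2) c)))) 0 1 = c (1 + r) := by
    rw [hessMv_apply, coeff_iter2 r s c 1 1 rfl]
    norm_num [Nat.factorial, Finsupp.single_apply]
  have e10 : hessMv ((pderiv (1:Fin 2))^[s] ((pderiv (0:Fin 2))^[r]
      (normalizeMv (bivar (r + s + 2) c)))) 1 0 = c (1 + r) := by
    rw [hessMv_apply]
    rw [show (Finsupp.single (1:Fin 2) 1 + Finsupp.single (0:Fin 2) 1)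
        = Finsupp.single (0:Fin 2) 1 + Finsupp.single (1:Fin 2) 1 from add_comm _ _]
    rw [coeff_iter2 r s c 1 1 rfl]
    norm_num [Nat.factorial, Finsupp.single_apply]
  have e11 : hessMv ((pderiv (1:Fin 2))^[s] ((pderiv (0:Fin 2))^[r]
      (normalizeMv (bivar (r + s + 2) c)))) 1 1 = c r := by
    rw [hessMv_apply]
    rw [show (Finsupp.single (1:Fin 2) 1 + Finsupp.single (1:Fin 2) 1)
        = Finsupp.single (0:Fin 2) 0 + Finsupp.single (1:Fin 2) 2 by
      ext x; fin_cases x <;> simp [Finsupp.single_apply]]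
    rw [coeff_iter2 r s c 0 2 rfl]
    norm_num [Nat.factorial, Finsupp.single_apply]
  have hdet := det_le_zero (by rw [e01, e10]) (by rw [e00]; exact hc _)
    (by rw [e11]; exact hc _) hpe
  rw [Matrix.det_fin_two, e00, e01, e10, e11] at hdet
  have h1 : r + 1 - 1 = r := by omega
  rw [show 2 + r = r + 1 + 1 by omega, show 1 + r = r + 1 by omega] at hdet
  rw [h1]
  nlinarith [hdet]

lemma lorentzian_mconvex {n k : ℕ} {f : MvPolynomial (Fin n) ℝ} (h : Lorentzian (k + 2) f) :
    MConvex ((f.support : Finset (Fin n →₀ ℕ)) : Set (Fin n →₀ ℕ)) := by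
  match k with
  | 0 => exact h.2.2.1
  | k + 1 => exact h.2.2.1

lemma noiz_step {d : ℕ} {c : ℕ → ℝ} (hd : 2 ≤ d)
    (hL : Lorentzian d (normalizeMv (bivar d c))) {a b : ℕ} (hab : a < b) (hbd : b ≤ d)
    (ha : c a ≠ 0) (hb : c b ≠ 0) : c (b - 1) ≠ 0 := by
  obtain ⟨k, rfl⟩ : ∃ k, d = k + 2 := ⟨d - 2, by omega⟩
  have MC := lorentzian_mconvex hL
  have hα : (Finsupp.single (0:Fin 2) b + Finsupp.single (1:Fin 2) (k + 2 - b))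
      ∈ ((normalizeMv (bivar (k + 2) c)).support : Set (Fin 2 →₀ ℕ)) := by
    rw [Finset.mem_coe, mem_supp_ng]
    simp only [e_app0, e_app1]
    exact ⟨by omega, hb⟩
  have hβ : (Finsupp.single (0:Fin 2) a + Finsupp.single (1:Fin 2) (k + 2 - a))
      ∈ ((normalizeMv (bivar (k + 2) c)).support : Set (Fin 2 →₀ ℕ)) := by
    rw [Finset.mem_coe, mem_supp_ng]
    simp only [e_app0, e_app1]
    exact ⟨by omega, ha⟩
  obtain ⟨j, hj, hmem, -⟩ := MC _ hα _ hβ 0 (by simp only [e_app0]; omega)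
  fin_cases j
  · simp only [Fin.zero_eta, Fin.isValue, e_app0] at hj
    omega
  · simp only [Fin.mk_one, Fin.isValue] at hj hmem
    have hpt : (Finsupp.single (0:Fin 2) b + Finsupp.single (1:Fin 2) (k + 2 - b))
        - Finsupp.single (0:Fin 2) 1 + Finsupp.single (1:Fin 2) 1
        = Finsupp.single (0:Fin 2) (b - 1) + Finsupp.single (1:Fin 2) (k + 2 - (b - 1)) := by
      ext x
      fin_cases x <;> simp [Finsupp.single_apply, Finsupp.tsub_apply] <;> omega
    rw [hpt, Finset.mem_coe, mem_supp_ng] at hmem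
    simp only [e_app0] at hmem
    exact hmem.2

lemma noiz {d : ℕ} {c : ℕ → ℝ}
    (hL : Lorentzian d (normalizeMv (bivar d c))) :
    ∀ m₁ m₂ m₃ : ℕ, m₁ ≤ m₂ → m₂ ≤ m₃ → m₃ ≤ d → c m₁ ≠ 0 → c m₃ ≠ 0 → c m₂ ≠ 0 := by
  intro m₁ m₂ m₃ h12 h23 h3d h1 h3
  rcases le_or_gt d 1 with hd | hd
  · have : m₁ = m₂ ∨ m₂ = m₃ := by omega
    rcases this with rfl | rfl
    · exact h1
    · exact h3
  · have claim : ∀ k, k ≤ m₃ - m₁ → c (m₃ - k) ≠ 0 := by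
      intro k
      induction k with
      | zero => intro _; simpa using h3
      | succ k ih =>
        intro hk
        have hik := ih (by omega)
        have := noiz_step (by omega) hL (a := m₁) (b := m₃ - k) (by omega) (by omega) h1 hik
        rw [show m₃ - k - 1 = m₃ - (k + 1) by omega] at this
        exact this
    have := claim (m₃ - m₂) (by omega)
    rw [show m₃ - (m₃ - m₂) = m₂ by omega] at this
    exact this

/-- A bivariate homogeneous polynomial `Σ c_m t^m q^(d-m)` with nonnegative
coefficients whose normalization is Lorentzian has log-concave coefficient
sequence with no internal zeros; in particular `(c_m)` is unimodal. -/
theorem stmt16 {d : ℕ} (c : ℕ → ℝ) (hc : ∀ m, 0 ≤ c m)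
    (hL : Lorentzian d (normalizeMv (∑ m ∈ Finset.range (d + 1),
      MvPolynomial.monomial
        (Finsupp.single (0 : Fin 2) m + Finsupp.single (1 : Fin 2) (d - m)) (c m)))) :
    (∀ m : ℕ, 0 < m → m < d → c (m - 1) * c (m + 1) ≤ c m ^ 2) ∧
    (∀ m₁ m₂ m₃ : ℕ, m₁ ≤ m₂ → m₂ ≤ m₃ → m₃ ≤ d → c m₁ ≠ 0 → c m₃ ≠ 0 → c m₂ ≠ 0) ∧
    ∃ M : ℕ, M ≤ d ∧ (∀ a b : ℕ, a ≤ b → b ≤ M → c a ≤ c b) ∧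
      (∀ a b : ℕ, M ≤ a → a ≤ b → b ≤ d → c b ≤ c a) := by
  have hL' : Lorentzian d (normalizeMv (bivar d c)) := hL
  have key1 := logconc c hc hL'
  have key2 := noiz hL'
  refine ⟨key1, key2, ?_⟩
  obtain ⟨M, hMmem, hmax⟩ := Finset.exists_max_image (Finset.range (d + 1)) c ⟨0, by simp⟩
  rw [Finset.mem_range] at hMmem
  have hMd : M ≤ d := by omega
  have hmax' : ∀ a, a ≤ d → c a ≤ c M := fun a ha =>
    hmax a (Finset.mem_range.mpr (by omega))
  -- stepwise increasing below M
  have stepup : ∀ k, k < M → c k ≤ c (k + 1) := by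
    intro k hk
    by_contra hlt
    push_neg at hlt
    have hck : 0 < c k := lt_of_le_of_lt (hc _) hlt
    have hcM : c M ≠ 0 := by
      intro h0
      have := hmax' k (by omega)
      rw [h0] at this
      linarith
    have hnz : ∀ j, k ≤ j → j ≤ M → 0 < c j := by
      intro j h1 h2
      exact lt_of_le_of_ne (hc j) (Ne.symm (key2 k j M h1 h2 hMd (ne_of_gt hck) hcM))
    have hdec : ∀ j, k ≤ j → j < M → c (j + 1) < c j := by
      intro j hj
      induction j, hj using Nat.le_induction with
      | base => intro _; exact hlt
      | succ j hj ih =>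
        intro hjM
        have hjM' : j < M := by omega
        have h1 := ih hjM'
        have h2 := hnz (j + 1) (by omega) (by omega)
        have h3 := key1 (j + 1) (by omega) (by omega)
        rw [show j + 1 - 1 = j by omega] at h3
        nlinarith
    have hfin := hdec (M - 1) (by omega) (by omega)
    rw [show M - 1 + 1 = M by omega] at hfin
    have := hmax' (M - 1) (by omega)
    linarith
  -- stepwise decreasing above M
  have stepdown : ∀ k, M ≤ k → k < d → c (k + 1) ≤ c k := by
    intro k hMk hkd
    by_contra hlt
    push_neg at hlt
    have hck1 : 0 < c (k + 1) := lt_of_le_of_lt (hc _) hlt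
    have hcM : 0 < c M := by
      have := hmax' (k + 1) (by omega)
      linarith
    have hnz : ∀ j, M ≤ j → j ≤ k + 1 → 0 < c j := by
      intro j h1 h2
      exact lt_of_le_of_ne (hc j)
        (Ne.symm (key2 M j (k + 1) h1 h2 (by omega) (ne_of_gt hcM) (ne_of_gt hck1)))
    have hdec : ∀ i, i ≤ k - M → c (k - i) < c (k - i + 1) := by
      intro i
      induction i with
      | zero => intro _; simpa using hlt
      | succ i ih =>
        intro hi
        have h1 := ih (by omega)
        have h2 := hnz (k - i) (by omega) (by omega)
        have h3 := key1 (k - i) (by omega) (by omega)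
        have e1 : k - i - 1 = k - (i + 1) := by omega
        have e2 : k - (i + 1) + 1 = k - i := by omega
        rw [e1] at h3
        rw [e2]
        nlinarith
    have hfin := hdec (k - M) (by omega)
    rw [show k - (k - M) = M by omega] at hfin
    have := hmax' (M + 1) (by omega)
    linarith
  refine ⟨M, hMd, ?_, ?_⟩
  · intro a b hab
    induction b, hab using Nat.le_induction with
    | base => intro _; exact le_refl _
    | succ b hab ih =>
      intro hbM
      exact le_trans (ih (by omega)) (stepup b (by omega))
  · intro a b hMa hab
    induction b, hab using Nat.le_induction with
    | base => intro _; exact le_refl _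
    | succ b hab ih =>
      intro hbd
      exact le_trans (stepdown b (by omega) (by omega)) (ih (by omega))
end
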